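/- Let T' = k[x₂,x₃], J₁ = (x₂², x₂x₃^q, x₃^{q+1}), J₂ = (x₃^{2q+1}), and I_n = Σ_{a₁+2a₂=n} J₁^{a₁}J₂^{a₂}. Then for all n ≥ 2, the colon ideal (I_n : x₂²) equals I_{n-1}. -/

import Mathlib

noncomputable section
open MvPolynomial

variable {k : Type*} [Field k]

/-- `J₁ = (x₂², x₂x₃^q, x₃^{q+1})` in `T' = k[x₂,x₃]` (variables `X 0 = x₂`, `X 1 = x₃`). -/
def J1 (k : Type*) [Field k] (q : ℕ) : Ideal (MvPolynomial (Fin 2) k) :=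
  Ideal.span {X 0 ^ 2, X 0 * X 1 ^ q, X 1 ^ (q + 1)}

/-- `J₂ = (x₃^{2q+1})`. -/
def J2 (k : Type*) [Field k] (q : ℕ) : Ideal (MvPolynomial (Fin 2) k) :=
  Ideal.span {X 1 ^ (2 * q + 1)}

/-- `Iₙ = Σ_{a₁+2a₂=n} J₁^{a₁} J₂^{a₂}` (so `I₀ = T'`). -/
def filtI (k : Type*) [Field k] (q n : ℕ) : Ideal (MvPolynomial (Fin 2) k) :=
  ⨆ (a : ℕ × ℕ) (_ : a.1 + 2 * a.2 = n), J1 k q ^ a.1 * J2 k q ^ a.2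

namespace Stmt3Aux

/-- The exponent vector `(a, b)` as a `Fin 2 →₀ ℕ`. -/
def ex (a b : ℕ) : Fin 2 →₀ ℕ := Finsupp.single 0 a + Finsupp.single 1 b

@[simp] lemma ex_apply0 (a b : ℕ) : ex a b 0 = a := by simp [ex]
@[simp] lemma ex_apply1 (a b : ℕ) : ex a b 1 = b := by simp [ex]

lemma ex_add (a b c d : ℕ) : ex a b + ex c d = ex (a + c) (b + d) := by
  simp only [ex, Finsupp.single_add]; abel

lemma ex_zero : ex 0 0 = 0 := by simp [ex]

lemma ex_le_iff {a b : ℕ} {d : Fin 2 →₀ ℕ} : ex a b ≤ d ↔ a ≤ d 0 ∧ b ≤ d 1 := by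
  rw [Finsupp.le_def]
  constructor
  · intro h; exact ⟨by simpa using h 0, by simpa using h 1⟩
  · rintro ⟨h0, h1⟩ i
    fin_cases i
    · simpa using h0
    · simpa using h1

lemma monomial_ex (a b : ℕ) :
    (monomial (ex a b) (1 : k)) = X 0 ^ a * X 1 ^ b := by
  rw [X_pow_eq_monomial, X_pow_eq_monomial, monomial_mul, one_mul]
  rfl

/-- Exponent set generating `filtI`. -/
def S (q n : ℕ) : Set (Fin 2 →₀ ℕ) :=
  {e | ∃ i j l m : ℕ, i + j + l + 2 * m = n ∧
    e = ex (2 * i + j) (q * j + (q + 1) * l + (2 * q + 1) * m)}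

/-- Exponent set generating `J1 ^ p`. -/
def T (q p : ℕ) : Set (Fin 2 →₀ ℕ) :=
  {e | ∃ i j l : ℕ, i + j + l = p ∧ e = ex (2 * i + j) (q * j + (q + 1) * l)}

lemma span_le_filtI (q n : ℕ) :
    Ideal.span ((fun s => monomial s (1 : k)) '' S q n) ≤ filtI k q n := by
  rw [Ideal.span_le]
  rintro _ ⟨e, ⟨i, j, l, m, hsum, rfl⟩, rfl⟩
  have h1 : (X 0 : MvPolynomial (Fin 2) k) ^ 2 ∈ J1 k q := Ideal.subset_span (by simp)
  have h2 : (X 0 * X 1 ^ q : MvPolynomial (Fin 2) k) ∈ J1 k q := Ideal.subset_span (by simp)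
  have h3 : (X 1 ^ (q + 1) : MvPolynomial (Fin 2) k) ∈ J1 k q := Ideal.subset_span (by simp)
  have h4 : (X 1 ^ (2 * q + 1) : MvPolynomial (Fin 2) k) ∈ J2 k q := Ideal.subset_span rfl
  have heq : (monomial (ex (2 * i + j) (q * j + (q + 1) * l + (2 * q + 1) * m)) (1 : k))
      = ((X 0 ^ 2) ^ i * (X 0 * X 1 ^ q) ^ j * (X 1 ^ (q + 1)) ^ l) * (X 1 ^ (2 * q + 1)) ^ m := by
    rw [monomial_ex]; ring
  have hmem : (monomial (ex (2 * i + j) (q * j + (q + 1) * l + (2 * q + 1) * m)) (1 : k))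
      ∈ J1 k q ^ (i + j + l) * J2 k q ^ m := by
    rw [heq]
    refine Ideal.mul_mem_mul ?_ (Ideal.pow_mem_pow h4 m)
    rw [pow_add, pow_add]
    exact Ideal.mul_mem_mul (Ideal.mul_mem_mul (Ideal.pow_mem_pow h1 i)
      (Ideal.pow_mem_pow h2 j)) (Ideal.pow_mem_pow h3 l)
  have hle : J1 k q ^ (i + j + l) * J2 k q ^ m ≤ filtI k q n :=
    le_iSup₂_of_le (i + j + l, m) (by omega) le_rfl
  exact hle hmem

lemma J1_pow_le (q p : ℕ) :
    (J1 k q) ^ p ≤ Ideal.span ((fun s => monomial s (1 : k)) '' T q p) := by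
  induction p with
  | zero =>
    rw [pow_zero, Ideal.one_eq_top, top_le_iff, Ideal.eq_top_iff_one]
    refine Ideal.subset_span ⟨ex 0 0, ⟨0, 0, 0, by norm_num, by norm_num⟩, ?_⟩
    rw [ex_zero]
    simp
  | succ p ih =>
    have hJ1 : J1 k q ≤ Ideal.span ((fun s => monomial s (1 : k)) '' T q 1) := by
      rw [J1, Ideal.span_le]
      intro x hx
      apply Ideal.subset_span
      simp only [Set.mem_insert_iff, Set.mem_singleton_iff] at hx
      rcases hx with rfl | rfl | rfl
      · exact ⟨ex 2 0, ⟨1, 0, 0, by norm_num, by norm_num⟩,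
          by show (monomial (ex 2 0)) (1 : k) = _; rw [monomial_ex]; simp⟩
      · exact ⟨ex 1 q, ⟨0, 1, 0, by norm_num, by norm_num⟩,
          by show (monomial (ex 1 q)) (1 : k) = _; rw [monomial_ex]; ring⟩
      · exact ⟨ex 0 (q + 1), ⟨0, 0, 1, by norm_num, by norm_num⟩,
          by show (monomial (ex 0 (q + 1))) (1 : k) = _; rw [monomial_ex]; ring⟩
    calc (J1 k q) ^ (p + 1) = (J1 k q) ^ p * J1 k q := by rw [pow_succ]
      _ ≤ Ideal.span ((fun s => monomial s (1 : k)) '' T q p) *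
          Ideal.span ((fun s => monomial s (1 : k)) '' T q 1) := Ideal.mul_mono ih hJ1
      _ ≤ Ideal.span ((fun s => monomial s (1 : k)) '' T q (p + 1)) := by
          rw [Ideal.span_mul_span', Ideal.span_le]
          rintro x hx
          rw [Set.mem_mul] at hx
          obtain ⟨u, ⟨e, ⟨i, j, l, hsum, rfl⟩, rfl⟩, v, ⟨e', ⟨i', j', l', hsum', rfl⟩, rfl⟩, rfl⟩ := hx
          apply Ideal.subset_span
          refine ⟨ex (2 * (i + i') + (j + j'))
            (q * (j + j') + (q + 1) * (l + l')), ⟨i + i', j + j', l + l', by omega, rfl⟩, ?_⟩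
          simp only [monomial_mul, one_mul, ex_add]
          congr 2 <;> ring
  
lemma filtI_le_span (q n : ℕ) :
    filtI k q n ≤ Ideal.span ((fun s => monomial s (1 : k)) '' S q n) := by
  refine iSup₂_le ?_
  rintro ⟨a1, a2⟩ hcond
  have h2 : (J2 k q) ^ a2 = Ideal.span {monomial (ex 0 ((2 * q + 1) * a2)) (1 : k)} := by
    rw [J2, Ideal.span_singleton_pow, monomial_ex, pow_zero, one_mul, ← pow_mul]
  calc (J1 k q) ^ a1 * (J2 k q) ^ a2
      ≤ Ideal.span ((fun s => monomial s (1 : k)) '' T q a1) *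
        Ideal.span {monomial (ex 0 ((2 * q + 1) * a2)) (1 : k)} := by
        rw [← h2]; exact Ideal.mul_mono (J1_pow_le q a1) le_rfl
    _ ≤ Ideal.span ((fun s => monomial s (1 : k)) '' S q n) := by
        rw [Ideal.span_mul_span', Ideal.span_le]
        rintro x hx
        rw [Set.mem_mul] at hx
        obtain ⟨u, ⟨e, ⟨i, j, l, hsum, rfl⟩, rfl⟩, v, hv, rfl⟩ := hx
        rw [Set.mem_singleton_iff] at hv
        subst hv
        apply Ideal.subset_span
        refine ⟨ex (2 * i + j) (q * j + (q + 1) * l + (2 * q + 1) * a2),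
          ⟨i, j, l, a2, by omega, rfl⟩, ?_⟩
        simp only [monomial_mul, one_mul, ex_add]
        congr 2 <;> ring

lemma filtI_eq_span (q n : ℕ) :
    filtI k q n = Ideal.span ((fun s => monomial s (1 : k)) '' S q n) :=
  le_antisymm (filtI_le_span q n) (span_le_filtI q n)

lemma key (q : ℕ) (hq : 1 ≤ q) {n : ℕ} (hn : 2 ≤ n) {A B : ℕ}
    (i j l m : ℕ) (hsum : i + j + l + 2 * m = n)
    (hA : 2 * i + j ≤ A + 2) (hB : q * j + (q + 1) * l + (2 * q + 1) * m ≤ B) :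
    ∃ i' j' l' m' : ℕ, i' + j' + l' + 2 * m' = n - 1 ∧ 2 * i' + j' ≤ A ∧
      q * j' + (q + 1) * l' + (2 * q + 1) * m' ≤ B := by
  rcases Nat.eq_zero_or_pos i with rfl | hi
  · rcases Nat.eq_zero_or_pos j with rfl | hj
    · rcases Nat.eq_zero_or_pos l with rfl | hl
      · -- j = l = 0, so 2m = n ≥ 2, m ≥ 1
        obtain ⟨m', rfl⟩ : ∃ m', m = m' + 1 := ⟨m - 1, by omega⟩
        refine ⟨0, 0, 1, m', by omega, by omega, ?_⟩
        nlinarith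
      · obtain ⟨l', rfl⟩ : ∃ l', l = l' + 1 := ⟨l - 1, by omega⟩
        refine ⟨0, 0, l', m, by omega, by omega, ?_⟩
        nlinarith
    · rcases Nat.lt_or_ge j (A + 2) with hj2 | hj2
      · obtain ⟨j', rfl⟩ : ∃ j', j = j' + 1 := ⟨j - 1, by omega⟩
        refine ⟨0, j', l, m, by omega, by omega, ?_⟩
        nlinarith
      · -- j = A + 2
        have hjA : j = A + 2 := by omega
        obtain ⟨j', rfl⟩ : ∃ j', j = j' + 2 := ⟨A, by omega⟩
        refine ⟨0, j', l + 1, m, by omega, by omega, ?_⟩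
        nlinarith
  · obtain ⟨i', rfl⟩ : ∃ i', i = i' + 1 := ⟨i - 1, by omega⟩
    exact ⟨i', j, l, m, by omega, by omega, hB⟩

end Stmt3Aux

open Stmt3Aux in
/-- for all n ≥ 2, the colon ideal (Iₙ : x₂²) equals I_{n-1}. -/
theorem stmt_3 (q : ℕ) (hq : 1 ≤ q) (n : ℕ) (hn : 2 ≤ n) :
    (filtI k q n).colon ((Ideal.span {X 0 ^ 2} : Ideal (MvPolynomial (Fin 2) k)) : Set (MvPolynomial (Fin 2) k)) = filtI k q (n - 1) := by
  have hX : (X 0 : MvPolynomial (Fin 2) k) ^ 2 = monomial (ex 2 0) (1 : k) := by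
    rw [monomial_ex]; simp
  ext f
  rw [Ideal.mem_colon_span_singleton, filtI_eq_span, filtI_eq_span,
    mem_ideal_span_monomial_image, mem_ideal_span_monomial_image]
  constructor
  · intro h d hd
    have hd2 : d + ex 2 0 ∈ (f * X 0 ^ 2).support := by
      rw [mem_support_iff, hX, coeff_mul_monomial, mul_one]
      exact mem_support_iff.mp hd
    obtain ⟨s, ⟨i, j, l, m, hsum, rfl⟩, hle⟩ := h _ hd2
    rw [ex_le_iff, Finsupp.add_apply, Finsupp.add_apply, ex_apply0, ex_apply1, add_zero] at hle
    obtain ⟨i', j', l', m', hsum', hA', hB'⟩ := key q hq hn i j l m hsum hle.1 hle.2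
    exact ⟨_, ⟨i', j', l', m', hsum', rfl⟩, ex_le_iff.mpr ⟨hA', hB'⟩⟩
  · intro h d hd
    rw [mem_support_iff, hX, coeff_mul_monomial'] at hd
    split_ifs at hd with hge
    · rw [mul_one] at hd
      obtain ⟨s, ⟨i, j, l, m, hsum, rfl⟩, hle⟩ := h _ (mem_support_iff.mpr hd)
      refine ⟨ex (2 * (i + 1) + j) (q * j + (q + 1) * l + (2 * q + 1) * m),
        ⟨i + 1, j, l, m, by omega, rfl⟩, ?_⟩
      have heq : ex (2 * (i + 1) + j) (q * j + (q + 1) * l + (2 * q + 1) * m)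
          = ex (2 * i + j) (q * j + (q + 1) * l + (2 * q + 1) * m) + ex 2 0 := by
        rw [ex_add]; congr 1 <;> ring
      rw [heq]
      calc ex (2 * i + j) (q * j + (q + 1) * l + (2 * q + 1) * m) + ex 2 0
          ≤ (d - ex 2 0) + ex 2 0 := add_le_add_left hle _
        _ = d := tsub_add_cancel_of_le hge
    · exact absurd rfl hd
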